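/- Let G be positive with E|log G| < ∞ and t > 0. Suppose D_t(G) and D_t(1/G) have densities g and h on (0,∞) satisfying for all λ > 0: ∫₀^∞ (1+λx)^{−t} g(x) dx = exp(−t E[log(1+λ/G)]) and ∫₀^∞ (1+λx)^{−t} h(x) dx = exp(−t E[log(1+λG)]). Then h(x) = x^{t−2} e^{−t E[log G]} g(1/x) for (almost every) x > 0. -/

import Mathlib

open MeasureTheory Set Real

open scoped ENNReal

lemma momentsZero (ψ : ℝ → ℝ) (hψm : Measurable ψ) (hψi : IntegrableOn ψ (Ioo 0 1))
    (hmom : ∀ m : ℕ, ∫ y in Ioo (0:ℝ) 1, y ^ m * ψ y = 0) :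
    ∀ᵐ y ∂(volume.restrict (Ioo (0:ℝ) 1)), ψ y = 0 := by
  have hterm : ∀ m : ℕ, IntegrableOn (fun y : ℝ => y ^ m * ψ y) (Ioo 0 1) := by
    intro m
    refine hψi.norm.mono' ((measurable_id.pow_const m).mul hψm).aestronglyMeasurable ?_
    filter_upwards [ae_restrict_mem measurableSet_Ioo] with y hy
    have h0 : (0:ℝ) ≤ y := le_of_lt hy.1
    have h1 : y ≤ 1 := le_of_lt hy.2
    rw [norm_mul]
    calc ‖y ^ m‖ * ‖ψ y‖ ≤ 1 * ‖ψ y‖ := by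
          apply mul_le_mul_of_nonneg_right _ (norm_nonneg _)
          rw [Real.norm_eq_abs, abs_pow, abs_of_nonneg h0]
          exact pow_le_one₀ h0 h1
      _ = ‖ψ y‖ := one_mul _
  have hcont_int : ∀ c : ℝ → ℝ, Continuous c →
      IntegrableOn (fun y => c y * ψ y) (Ioo 0 1) := by
    intro c hc
    obtain ⟨M, hM⟩ := (isCompact_Icc (a := (0:ℝ)) (b := 1)).exists_bound_of_continuousOn
      hc.continuousOn
    refine (hψi.norm.const_mul (|M|+1)).mono' (hc.measurable.mul hψm).aestronglyMeasurable ?_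
    filter_upwards [ae_restrict_mem measurableSet_Ioo] with y hy
    rw [norm_mul]
    apply mul_le_mul _ le_rfl (norm_nonneg _) (by positivity)
    calc ‖c y‖ ≤ M := hM y ⟨hy.1.le, hy.2.le⟩
      _ ≤ |M| + 1 := by
          have := le_abs_self M; linarith
  have hpoly : ∀ p : Polynomial ℝ, ∫ y in Ioo (0:ℝ) 1, p.eval y * ψ y = 0 := by
    intro p
    have : ∀ y : ℝ, p.eval y * ψ y
        = ∑ i ∈ Finset.range (p.natDegree + 1), p.coeff i * (y ^ i * ψ y) := by
      intro y
      rw [Polynomial.eval_eq_sum_range, Finset.sum_mul]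
      simp [mul_assoc]
    simp_rw [this]
    rw [integral_finset_sum]
    · refine Finset.sum_eq_zero fun i _ => ?_
      rw [integral_const_mul, hmom i, mul_zero]
    · exact fun i _ => ((hterm i).const_mul _)
  have hcont : ∀ c : ℝ → ℝ, Continuous c → ∫ y in Ioo (0:ℝ) 1, c y * ψ y = 0 := by
    intro c hc
    have hci : IntegrableOn (fun y => c y * ψ y) (Ioo 0 1) := by
      obtain ⟨M, hM⟩ := (isCompact_Icc (a := (0:ℝ)) (b := 1)).exists_bound_of_continuousOn
        hc.continuousOn
      refine (hψi.norm.const_mul (|M|+1)).mono' (hc.measurable.mul hψm).aestronglyMeasurable ?_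
      filter_upwards [ae_restrict_mem measurableSet_Ioo] with y hy
      rw [norm_mul]
      apply mul_le_mul _ le_rfl (norm_nonneg _) (by positivity)
      calc ‖c y‖ ≤ M := hM y ⟨hy.1.le, hy.2.le⟩
        _ ≤ |M| + 1 := by
            have := le_abs_self M; linarith
    -- polynomial approximation
    have hI : Integrable (fun y => ‖ψ y‖) (volume.restrict (Ioo (0:ℝ) 1)) := hψi.norm
    set B : ℝ := ∫ y in Ioo (0:ℝ) 1, ‖ψ y‖ with hB
    have hB0 : 0 ≤ B := integral_nonneg fun y => norm_nonneg _
    have key : ∀ ε : ℝ, 0 < ε → |∫ y in Ioo (0:ℝ) 1, c y * ψ y| ≤ ε * B := by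
      intro ε hε
      -- get a polynomial q with sup distance < ε on Icc 0 1
      have hcl := polynomialFunctions_closure_eq_top 0 1
      set cI : C(Icc (0:ℝ) 1, ℝ) := ⟨fun y => c y, hc.comp continuous_subtype_val⟩ with hcI
      have hmem : cI ∈ (polynomialFunctions (Icc (0:ℝ) 1)).topologicalClosure := by
        rw [hcl]; trivial
      rw [← SetLike.mem_coe, Subalgebra.topologicalClosure_coe, Metric.mem_closure_iff] at hmem
      obtain ⟨q, hq_mem, hq_dist⟩ := hmem ε hε
      rw [SetLike.mem_coe, polynomialFunctions, Subalgebra.mem_map] at hq_mem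
      obtain ⟨p, -, hp⟩ := hq_mem
      have hsup : ∀ y ∈ Icc (0:ℝ) 1, |c y - p.eval y| ≤ ε := by
        intro y hy
        have h1 : dist (cI ⟨y, hy⟩) (q ⟨y, hy⟩) ≤ ε :=
          (ContinuousMap.dist_apply_le_dist _).trans hq_dist.le
        rw [← hp] at h1
        simpa [Real.dist_eq, hcI, Polynomial.toContinuousMapOnAlgHom_apply,
          Polynomial.toContinuousMapOn_apply, Polynomial.toContinuousMap_apply] using h1
      have hsplit : ∫ y in Ioo (0:ℝ) 1, c y * ψ y
          = ∫ y in Ioo (0:ℝ) 1, (c y - p.eval y) * ψ y := by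
        rw [show (fun y => (c y - p.eval y) * ψ y)
            = fun y => c y * ψ y - p.eval y * ψ y from by ext y; ring,
          integral_sub hci (hcont_int _ p.continuous),
          hpoly p, sub_zero]
      rw [hsplit]
      calc |∫ y in Ioo (0:ℝ) 1, (c y - p.eval y) * ψ y|
          ≤ ∫ y in Ioo (0:ℝ) 1, ε * ‖ψ y‖ := by
            rw [← Real.norm_eq_abs]
            refine norm_integral_le_of_norm_le (hI.const_mul ε) ?_
            filter_upwards [ae_restrict_mem measurableSet_Ioo] with y hy
            rw [norm_mul]
            exact mul_le_mul_of_nonneg_right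
              (by rw [Real.norm_eq_abs]; exact hsup y ⟨hy.1.le, hy.2.le⟩) (norm_nonneg _)
        _ = ε * B := by rw [integral_const_mul]
    by_contra hne
    have habs : 0 < |∫ y in Ioo (0:ℝ) 1, c y * ψ y| := abs_pos.mpr hne
    rcases eq_or_lt_of_le hB0 with hB0' | hB0'
    · have := key 1 one_pos
      rw [← hB0', mul_zero] at this
      exact absurd this (not_le.mpr habs)
    · have := key (|∫ y in Ioo (0:ℝ) 1, c y * ψ y| / (2 * B)) (by positivity)
      rw [div_mul_eq_mul_div, mul_comm] at this
      rw [show B * |∫ y in Ioo (0:ℝ) 1, c y * ψ y| / (2 * B)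
          = |∫ y in Ioo (0:ℝ) 1, c y * ψ y| / 2 from by field_simp] at this
      linarith
  -- conclude via distributions
  have hloc : LocallyIntegrable ψ (volume.restrict (Ioo (0:ℝ) 1)) :=
    hψi.locallyIntegrable
  refine ae_eq_zero_of_integral_contDiff_smul_eq_zero hloc fun c hc hcs => ?_
  simp only [smul_eq_mul]
  exact hcont c hc.continuous

lemma expNegImage : (fun x : ℝ => Real.exp (-x)) '' (Ioi 0) = Ioo 0 1 := by
  ext y
  constructor
  · rintro ⟨x, hx, rfl⟩
    exact ⟨Real.exp_pos _, by
      rw [Real.exp_lt_one_iff]; simpa using (mem_Ioi.mp hx)⟩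
  · rintro ⟨hy0, hy1⟩
    exact ⟨-Real.log y, by simpa using Real.log_neg hy0 hy1, by
      simp [Real.exp_log hy0]⟩

lemma expNegDeriv : ∀ x ∈ Ioi (0:ℝ),
    HasDerivWithinAt (fun x : ℝ => Real.exp (-x)) (-Real.exp (-x)) (Ioi 0) x := by
  intro x _
  have h : HasDerivAt (fun x : ℝ => Real.exp (-x)) (Real.exp (-x) * (-1)) x :=
    (Real.hasDerivAt_exp (-x)).comp x ((hasDerivAt_id x).neg)
  simpa [mul_comm] using h.hasDerivWithinAt

lemma expNegInj : InjOn (fun x : ℝ => Real.exp (-x)) (Ioi 0) :=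
  fun a _ b _ hab => neg_injective (Real.exp_injective hab)

lemma laplaceZero (f : ℝ → ℝ) (hfm : Measurable f) (hfi : IntegrableOn f (Ioi 0))
    (hL : ∀ u : ℝ, 0 < u → ∫ x in Ioi (0:ℝ), Real.exp (-(u*x)) * f x = 0) :
    ∀ᵐ x ∂(volume.restrict (Ioi (0:ℝ))), f x = 0 := by
  set ψ : ℝ → ℝ := fun y => f (-Real.log y) with hψ
  have hψm : Measurable ψ := hfm.comp measurable_log.neg
  have hconv : ∀ k : ℝ → ℝ, ∫ y in Ioo (0:ℝ) 1, k y
      = ∫ x in Ioi (0:ℝ), |(-Real.exp (-x))| • k (Real.exp (-x)) := by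
    intro k
    rw [← expNegImage]
    exact integral_image_eq_integral_abs_deriv_smul measurableSet_Ioi expNegDeriv expNegInj k
  have hcomp : ∀ x : ℝ, ψ (Real.exp (-x)) = f x := by
    intro x; simp [hψ, Real.log_exp]
  have habs : ∀ x : ℝ, |(-Real.exp (-x))| = Real.exp (-x) := by
    intro x; rw [abs_neg, abs_of_pos (Real.exp_pos _)]
  have hψi : IntegrableOn ψ (Ioo 0 1) := by
    rw [← expNegImage,
      integrableOn_image_iff_integrableOn_abs_deriv_smul measurableSet_Ioi expNegDeriv expNegInj]
    refine hfi.norm.mono' ?_ ?_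
    · exact ((measurable_exp.comp measurable_neg).neg.abs.smul
        (hψm.comp (measurable_exp.comp measurable_neg))).aestronglyMeasurable
    · filter_upwards [ae_restrict_mem measurableSet_Ioi] with x hx
      rw [smul_eq_mul, norm_mul, hcomp, habs]
      calc ‖Real.exp (-x)‖ * ‖f x‖ ≤ 1 * ‖f x‖ := by
            apply mul_le_mul_of_nonneg_right _ (norm_nonneg _)
            rw [Real.norm_eq_abs, abs_of_pos (Real.exp_pos _)]
            exact Real.exp_le_one_iff.mpr (by simpa using (mem_Ioi.mp hx).le)
        _ = ‖f x‖ := one_mul _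
  have hmom : ∀ m : ℕ, ∫ y in Ioo (0:ℝ) 1, y ^ m * ψ y = 0 := by
    intro m
    rw [hconv fun y => y ^ m * ψ y]
    rw [show (fun x => |(-Real.exp (-x))| • ((Real.exp (-x)) ^ m * ψ (Real.exp (-x))))
        = fun x => Real.exp (-(((m:ℝ) + 1) * x)) * f x from ?_]
    · exact hL ((m:ℝ)+1) (by positivity)
    · funext x
      rw [smul_eq_mul, habs, hcomp, ← Real.exp_nat_mul, ← mul_assoc, ← Real.exp_add]
      ring_nf
  have hψ0 := momentsZero ψ hψm hψi hmom
  have hnormzero : ∫ y in Ioo (0:ℝ) 1, ‖ψ y‖ = 0 := by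
    apply integral_eq_zero_of_ae
    filter_upwards [hψ0] with y hy
    simp [hy]
  have hEzero : ∫ x in Ioi (0:ℝ), Real.exp (-x) * ‖f x‖ = 0 := by
    have h1 := hconv fun y => ‖ψ y‖
    have h2 : (fun x => |(-Real.exp (-x))| • ‖ψ (Real.exp (-x))‖)
        = fun x => Real.exp (-x) * ‖f x‖ := by
      funext x; rw [smul_eq_mul, habs, hcomp]
    rw [h2] at h1
    rw [← h1, hnormzero]
  have hEint : IntegrableOn (fun x => Real.exp (-x) * ‖f x‖) (Ioi 0) := by
    refine hfi.norm.mono' ((measurable_exp.comp measurable_neg).mul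
      hfm.norm).aestronglyMeasurable ?_
    filter_upwards [ae_restrict_mem measurableSet_Ioi] with x hx
    rw [norm_mul, norm_norm]
    calc ‖Real.exp (-x)‖ * ‖f x‖ ≤ 1 * ‖f x‖ := by
          apply mul_le_mul_of_nonneg_right _ (norm_nonneg _)
          rw [Real.norm_eq_abs, abs_of_pos (Real.exp_pos _)]
          exact Real.exp_le_one_iff.mpr (by simpa using (mem_Ioi.mp hx).le)
      _ = ‖f x‖ := one_mul _
  have := (integral_eq_zero_iff_of_nonneg_ae (Filter.Eventually.of_forall
    fun x => mul_nonneg (Real.exp_pos _).le (norm_nonneg _)) hEint).mp hEzero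
  filter_upwards [this] with x hx
  have : Real.exp (-x) * ‖f x‖ = 0 := hx
  rcases mul_eq_zero.mp this with h | h
  · exact absurd h (Real.exp_pos _).ne'
  · simpa using h

lemma baseOne {l x : ℝ} (hl : 0 < l) (hx : 0 < x) : (1:ℝ) ≤ 1 + l * x := by nlinarith

lemma rpow_le_one' {b s : ℝ} (hb : 1 ≤ b) (hs : 0 < s) : b ^ (-s) ≤ 1 :=
  Real.rpow_le_one_of_one_le_of_nonpos hb (by linarith)

lemma stieltjesIntegrable (f : ℝ → ℝ) (hfm : Measurable f) (hfi : IntegrableOn f (Ioi 0))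
    (s l : ℝ) (hs : 0 < s) (hl : 0 < l) :
    IntegrableOn (fun x => (1 + l * x) ^ (-s) * f x) (Ioi 0) := by
  refine hfi.norm.mono'
    (((measurable_const.add (measurable_const.mul measurable_id)).pow_const _).mul
      hfm).aestronglyMeasurable ?_
  filter_upwards [ae_restrict_mem measurableSet_Ioi] with x hx
  rw [norm_mul]
  calc ‖(1 + l * x) ^ (-s)‖ * ‖f x‖ ≤ 1 * ‖f x‖ := by
        apply mul_le_mul_of_nonneg_right _ (norm_nonneg _)
        rw [Real.norm_eq_abs, abs_of_pos (Real.rpow_pos_of_pos (by nlinarith [mem_Ioi.mp hx]) _)]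
        exact rpow_le_one' (baseOne hl (mem_Ioi.mp hx)) hs
    _ = ‖f x‖ := one_mul _

lemma stieltjesDerivIntegrable (f : ℝ → ℝ) (hfm : Measurable f) (hfi : IntegrableOn f (Ioi 0))
    (s l : ℝ) (hs : 0 < s) (hl : 0 < l) :
    IntegrableOn (fun x => (-s * (1 + l * x) ^ (-s - 1) * x) * f x) (Ioi 0) := by
  refine (hfi.norm.const_mul (s / l)).mono'
    ((((measurable_const.mul
      ((measurable_const.add (measurable_const.mul measurable_id)).pow_const _)).mul
      measurable_id).mul hfm)).aestronglyMeasurable ?_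
  filter_upwards [ae_restrict_mem measurableSet_Ioi] with x hx
  have hx0 := mem_Ioi.mp hx
  have hb0 : (0:ℝ) < 1 + l * x := by nlinarith
  have hb1 : (1:ℝ) ≤ 1 + l * x := baseOne hl hx0
  rw [norm_mul, norm_mul, norm_mul]
  have h1 : ‖(1 + l * x) ^ (-s - 1)‖ * ‖x‖ ≤ 1 / l := by
    rw [show -s - 1 = -s + (-1) from by ring, Real.rpow_add hb0, Real.rpow_neg_one]
    rw [norm_mul, Real.norm_eq_abs, Real.norm_eq_abs, Real.norm_eq_abs,
      abs_of_pos (Real.rpow_pos_of_pos hb0 _), abs_of_pos (inv_pos.mpr hb0),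
      abs_of_pos hx0]
    calc (1 + l * x) ^ (-s) * (1 + l * x)⁻¹ * x
        ≤ 1 * ((1 + l * x)⁻¹ * x) := by
          rw [mul_assoc]
          apply mul_le_mul_of_nonneg_right (rpow_le_one' hb1 hs)
          positivity
      _ = x / (1 + l * x) := by rw [one_mul]; ring
      _ ≤ 1 / l := by
          rw [div_le_div_iff₀ hb0 hl]
          nlinarith
  calc ‖-s‖ * ‖(1 + l * x) ^ (-s - 1)‖ * ‖x‖ * ‖f x‖
      ≤ s * (1 / l) * ‖f x‖ := by
        apply mul_le_mul_of_nonneg_right _ (norm_nonneg _)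
        rw [norm_neg, Real.norm_eq_abs, abs_of_pos hs, mul_assoc]
        exact mul_le_mul_of_nonneg_left h1 hs.le
    _ = s / l * ‖f x‖ := by ring

set_option maxHeartbeats 1000000 in
lemma stieltjesStep (f : ℝ → ℝ) (hfm : Measurable f) (hfi : IntegrableOn f (Ioi 0))
    (s : ℝ) (hs : 0 < s)
    (ih : ∀ l : ℝ, 0 < l → ∫ x in Ioi (0:ℝ), (1 + l * x) ^ (-s) * f x = 0) :
    ∀ l : ℝ, 0 < l → ∫ x in Ioi (0:ℝ), (1 + l * x) ^ (-(s+1)) * f x = 0 := by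
      intro l hl
      -- derivative of the transform vanishes
      have hD : ∫ x in Ioi (0:ℝ), (-s * (1 + l * x) ^ (-s - 1) * x) * f x = 0 := by
        have hball : ∀ l' ∈ Metric.ball l (l/2), 0 < l' := by
          intro l' hl'
          rw [Metric.mem_ball, Real.dist_eq, abs_lt] at hl'
          linarith [hl'.1]
        have hder := hasDerivAt_integral_of_dominated_loc_of_deriv_le
          (F := fun l' x => (1 + l' * x) ^ (-s) * f x)
          (F' := fun l' x => (-s * (1 + l' * x) ^ (-s - 1) * x) * f x)
          (x₀ := l) (s := Metric.ball l (l/2)) (μ := volume.restrict (Ioi 0))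
          (bound := fun x => (s * (2 / l)) * ‖f x‖)
          (Metric.ball_mem_nhds l (by positivity))
          (Filter.Eventually.of_forall fun l' =>
            (((measurable_const.add (measurable_const.mul measurable_id)).pow_const _).mul
              hfm).aestronglyMeasurable)
          (stieltjesIntegrable f hfm hfi s l hs hl)
          ((((measurable_const.mul
            ((measurable_const.add (measurable_const.mul measurable_id)).pow_const _)).mul
            measurable_id).mul hfm)).aestronglyMeasurable
          ?_ ((hfi.norm.const_mul _)) ?_
        · -- use that the transform is locally constant 0
          have heq : (fun l' => ∫ x in Ioi (0:ℝ), (1 + l' * x) ^ (-s) * f x)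
              =ᶠ[nhds l] fun _ => (0:ℝ) := by
            filter_upwards [Metric.ball_mem_nhds l (by positivity : (0:ℝ) < l/2)] with l' hl'
            exact ih l' (hball l' hl')
          have hzero : HasDerivAt
              (fun l' => ∫ x in Ioi (0:ℝ), (1 + l' * x) ^ (-s) * f x) 0 l :=
            (hasDerivAt_const l (0:ℝ)).congr_of_eventuallyEq heq
          exact hder.2.unique hzero
        · -- bound
          filter_upwards [ae_restrict_mem measurableSet_Ioi] with x hx
          intro l' hl'
          have hl'0 := hball l' hl'
          have hl'half : l/2 ≤ l' := by
            rw [Metric.mem_ball, Real.dist_eq, abs_lt] at hl'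
            linarith [hl'.1]
          have hx0 := mem_Ioi.mp hx
          have hb0 : (0:ℝ) < 1 + l' * x := by nlinarith
          have hb1 : (1:ℝ) ≤ 1 + l' * x := baseOne hl'0 hx0
          rw [norm_mul, norm_mul, norm_mul]
          have h1 : ‖(1 + l' * x) ^ (-s - 1)‖ * ‖x‖ ≤ 2 / l := by
            rw [show -s - 1 = -s + (-1) from by ring, Real.rpow_add hb0, Real.rpow_neg_one]
            rw [norm_mul, Real.norm_eq_abs, Real.norm_eq_abs, Real.norm_eq_abs,
              abs_of_pos (Real.rpow_pos_of_pos hb0 _), abs_of_pos (inv_pos.mpr hb0),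
              abs_of_pos hx0]
            calc (1 + l' * x) ^ (-s) * (1 + l' * x)⁻¹ * x
                ≤ 1 * ((1 + l' * x)⁻¹ * x) := by
                  rw [mul_assoc]
                  apply mul_le_mul_of_nonneg_right (rpow_le_one' hb1 hs)
                  positivity
              _ = x / (1 + l' * x) := by rw [one_mul]; ring
              _ ≤ 1 / l' := by
                  rw [div_le_div_iff₀ hb0 hl'0]
                  nlinarith
              _ ≤ 2 / l := by
                  rw [div_le_div_iff₀ hl'0 hl]
                  nlinarith
          calc ‖-s‖ * ‖(1 + l' * x) ^ (-s - 1)‖ * ‖x‖ * ‖f x‖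
              ≤ s * (2 / l) * ‖f x‖ := by
                apply mul_le_mul_of_nonneg_right _ (norm_nonneg _)
                rw [norm_neg, Real.norm_eq_abs, abs_of_pos hs, mul_assoc]
                exact mul_le_mul_of_nonneg_left h1 hs.le
            _ = s * (2 / l) * ‖f x‖ := rfl
        · -- differentiability
          filter_upwards [ae_restrict_mem measurableSet_Ioi] with x hx
          intro l' hl'
          have hl'0 := hball l' hl'
          have hx0 := mem_Ioi.mp hx
          have hb0 : (0:ℝ) < 1 + l' * x := by nlinarith
          have hinner : HasDerivAt (fun l' : ℝ => 1 + l' * x) x l' := by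
            simpa using ((hasDerivAt_id l').mul_const x).const_add 1
          have houter : HasDerivAt (fun l' : ℝ => (1 + l' * x) ^ (-s))
              (-s * (1 + l' * x) ^ (-s - 1) * x) l' := by
            have := hinner.rpow_const (p := -s) (Or.inl hb0.ne')
            simpa [mul_comm, mul_assoc, mul_left_comm] using this
          simpa [mul_comm, mul_assoc, mul_left_comm] using houter.mul_const (f x)
      -- combine
      have hkey : ∀ᵐ x ∂(volume.restrict (Ioi (0:ℝ))),
          (1 + l * x) ^ (-(s+1)) * f x
          = (1 + l * x) ^ (-s) * f x + (l / s) * ((-s * (1 + l * x) ^ (-s - 1) * x) * f x) := by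
        filter_upwards [ae_restrict_mem measurableSet_Ioi] with x hx
        have hx0 := mem_Ioi.mp hx
        have hb0 : (0:ℝ) < 1 + l * x := by nlinarith
        have hc : (-(s + 1)) = -s - 1 := by ring
        rw [hc]
        have hsplit : (1 + l * x) ^ (-s) = (1 + l * x) ^ (-s - 1) * (1 + l * x) := by
          rw [← Real.rpow_add_one hb0.ne' (-s - 1)]
          ring_nf
        rw [hsplit]
        field_simp
        ring
      rw [integral_congr_ae hkey, integral_add (stieltjesIntegrable f hfm hfi s l hs hl)
        ((stieltjesDerivIntegrable f hfm hfi s l hs hl).const_mul _),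
        ih l hl, integral_const_mul, hD, mul_zero, add_zero]

set_option maxHeartbeats 1000000 in
lemma stieltjesLaplace (f : ℝ → ℝ) (t : ℝ) (ht : 0 < t) (hfm : Measurable f)
    (hfi : IntegrableOn f (Ioi 0))
    (hSn : ∀ n : ℕ, ∀ l : ℝ, 0 < l →
      ∫ x in Ioi (0:ℝ), (1 + l * x) ^ (-(t + n)) * f x = 0)
    (u : ℝ) (hu : 0 < u) : ∫ x in Ioi (0:ℝ), Real.exp (-(u * x)) * f x = 0 := by
    have hnull : ∀ n : ℕ, ∫ x in Ioi (0:ℝ),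
        (1 + (u / (n+1)) * x) ^ (-(t + ((n:ℝ)+1))) * f x = 0 := by
      intro n
      have := hSn (n+1) (u / (n+1)) (by positivity)
      push_cast at this
      convert this using 3
    have htend : Filter.Tendsto
        (fun n : ℕ => ∫ x in Ioi (0:ℝ), (1 + (u / (n+1)) * x) ^ (-(t + ((n:ℝ)+1))) * f x)
        Filter.atTop (nhds (∫ x in Ioi (0:ℝ), Real.exp (-(u * x)) * f x)) := by
      apply tendsto_integral_of_dominated_convergence (fun x => ‖f x‖)
      · intro n
        exact (((measurable_const.add (measurable_const.mul measurable_id)).pow_const _).mul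
          hfm).aestronglyMeasurable
      · exact hfi.norm
      · intro n
        filter_upwards [ae_restrict_mem measurableSet_Ioi] with x hx
        have hx0 := mem_Ioi.mp hx
        have hun : (0:ℝ) < u / (n+1) := by positivity
        rw [norm_mul]
        calc ‖(1 + (u / (n+1)) * x) ^ (-(t + ((n:ℝ)+1)))‖ * ‖f x‖ ≤ 1 * ‖f x‖ := by
              apply mul_le_mul_of_nonneg_right _ (norm_nonneg _)
              rw [Real.norm_eq_abs,
                abs_of_pos (Real.rpow_pos_of_pos (by nlinarith) _)]
              exact rpow_le_one' (baseOne hun hx0) (by positivity)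
          _ = ‖f x‖ := one_mul _
      · filter_upwards [ae_restrict_mem measurableSet_Ioi] with x hx
        have hx0 := mem_Ioi.mp hx
        set c : ℝ := u * x with hc
        have hc0 : 0 < c := by positivity
        have hrw : ∀ n : ℕ, (1 + (u / (n+1)) * x) ^ (-(t + ((n:ℝ)+1))) * f x
            = ((1 + c / (n+1)) ^ t * (1 + c / (n+1)) ^ (n+1 : ℕ))⁻¹ * f x := by
          intro n
          have hb0 : (0:ℝ) < 1 + c / (n+1) := by positivity
          have e1 : (u / (n+1)) * x = c / (n+1) := by rw [hc]; ring
          have e2 : ((1 + c/(n+1)) ^ t * (1 + c/(n+1)) ^ (n+1:ℕ))⁻¹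
              = (1 + c/(n+1)) ^ (-(t + ((n:ℝ)+1))) := by
            rw [← Real.rpow_natCast (1 + c/(n+1)) (n+1), ← Real.rpow_add hb0,
              ← Real.rpow_neg hb0.le]
            norm_num
          rw [e1, e2]
        simp_rw [hrw]
        have h1 : Filter.Tendsto (fun n : ℕ => (1 + c / (n+1)) ^ t)
            Filter.atTop (nhds 1) := by
          have hbase : Filter.Tendsto (fun n : ℕ => 1 + c / (n+1 : ℝ))
              Filter.atTop (nhds 1) := by
            have : Filter.Tendsto (fun n : ℕ => c / (n+1 : ℝ)) Filter.atTop (nhds 0) := by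
              have h := tendsto_one_div_add_atTop_nhds_zero_nat.const_mul c
              simpa [mul_one_div, div_eq_mul_inv] using h
            simpa using (tendsto_const_nhds (x := (1:ℝ))).add this
          have := (Real.continuousAt_rpow_const 1 t (Or.inl one_ne_zero)).tendsto.comp hbase
          simpa [Function.comp_def] using this
        have h2 : Filter.Tendsto (fun n : ℕ => (1 + c / (n+1)) ^ (n+1 : ℕ))
            Filter.atTop (nhds (Real.exp c)) := by
          have hcomp := (Real.tendsto_one_add_div_pow_exp c).comp (Filter.tendsto_add_atTop_nat 1)
          apply hcomp.congr
          intro n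
          show (1 + c / (↑(n+1) : ℝ)) ^ (n+1) = (1 + c/((n:ℝ)+1)) ^ (n+1)
          push_cast
          ring
        have h3 : Filter.Tendsto
            (fun n : ℕ => ((1 + c / (n+1)) ^ t * (1 + c / (n+1)) ^ (n+1 : ℕ))⁻¹)
            Filter.atTop (nhds (Real.exp c)⁻¹) := by
          have := (h1.mul h2).inv₀ (by simpa using (Real.exp_pos c).ne')
          simpa using this
        have h4 : (Real.exp c)⁻¹ = Real.exp (-(u*x)) := by rw [← Real.exp_neg, hc]
        rw [← h4]
        exact h3.mul_const (f x)
    exact tendsto_nhds_unique (htend.congr hnull) tendsto_const_nhds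

lemma stieltjesZero (f : ℝ → ℝ) (t : ℝ) (ht : 0 < t) (hfm : Measurable f)
    (hfi : IntegrableOn f (Ioi 0))
    (hS : ∀ l : ℝ, 0 < l → ∫ x in Ioi (0:ℝ), (1 + l * x) ^ (-t) * f x = 0) :
    ∀ᵐ x ∂(volume.restrict (Ioi (0:ℝ))), f x = 0 := by
  have hSn : ∀ n : ℕ, ∀ l : ℝ, 0 < l →
      ∫ x in Ioi (0:ℝ), (1 + l * x) ^ (-(t + n)) * f x = 0 := by
    intro n
    induction n with
    | zero => simpa using hS
    | succ n ih =>
      have := stieltjesStep f hfm hfi (t + n) (by positivity) ih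
      intro l hl
      have h2 := this l hl
      rw [show -(t + ((n:ℕ)+1 : ℕ)) = -((t + (n:ℝ)) + 1) from by push_cast; ring]
      exact h2
  exact laplaceZero f hfm hfi (stieltjesLaplace f t ht hfm hfi hSn)

lemma logOnePlusIntegrable {Ω : Type*} [MeasurableSpace Ω] (μ : Measure Ω)
    [IsProbabilityMeasure μ] (X : Ω → ℝ) (hXm : Measurable X) (hX_pos : ∀ ω, 0 < X ω)
    (hX_int : Integrable (fun ω => Real.log (X ω)) μ) (a : ℝ) (ha : 0 < a) :
    Integrable (fun ω => Real.log (1 + a * X ω)) μ := by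
  refine ((integrable_const (Real.log (1+a) + Real.log 2)).add hX_int.norm).mono'
    ((measurable_const.add (measurable_const.mul hXm)).log).aestronglyMeasurable ?_
  refine Filter.Eventually.of_forall fun ω => ?_
  have hX := hX_pos ω
  have h1 : (1:ℝ) ≤ 1 + a * X ω := by nlinarith
  rw [Real.norm_eq_abs, abs_of_nonneg (Real.log_nonneg h1)]
  have hstep : 1 + a * X ω ≤ (1 + a) * (1 + X ω) := by nlinarith
  have h2 : Real.log (1 + a * X ω) ≤ Real.log (1 + a) + Real.log (1 + X ω) := by
    calc Real.log (1 + a * X ω) ≤ Real.log ((1 + a) * (1 + X ω)) :=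
          Real.log_le_log (by nlinarith) hstep
      _ = Real.log (1 + a) + Real.log (1 + X ω) :=
          Real.log_mul (by nlinarith) (by nlinarith)
  have h3 : Real.log (1 + X ω) ≤ Real.log 2 + |Real.log (X ω)| := by
    rcases le_total (X ω) 1 with hc | hc
    · calc Real.log (1 + X ω) ≤ Real.log 2 := Real.log_le_log (by nlinarith) (by nlinarith)
        _ ≤ Real.log 2 + |Real.log (X ω)| := by
            have := abs_nonneg (Real.log (X ω)); linarith
    · calc Real.log (1 + X ω) ≤ Real.log (2 * X ω) :=
            Real.log_le_log (by nlinarith) (by nlinarith)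
        _ = Real.log 2 + Real.log (X ω) := Real.log_mul two_ne_zero hX.ne'
        _ ≤ Real.log 2 + |Real.log (X ω)| := by
            have := le_abs_self (Real.log (X ω)); linarith
  simp only [Pi.add_apply, Real.norm_eq_abs]
  linarith

lemma rpowWeightIntegrable (g : ℝ → ℝ) (hg_meas : Measurable g)
    (hg_nonneg : ∀ x, 0 < x → 0 ≤ g x) (hg_int : IntegrableOn g (Ioi 0))
    (t : ℝ) (ht : 0 < t) (K : ℝ) (hK : 0 ≤ K)
    (hbound : ∀ n : ℕ, ∫ x in Ioi (0:ℝ), (((n:ℝ)+1)⁻¹ + x) ^ (-t) * g x ≤ K) :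
    IntegrableOn (fun x => x ^ (-t) * g x) (Ioi 0) := by
  have hm : Measurable fun x : ℝ => x ^ (-t) * g x :=
    ((by fun_prop : Measurable fun x : ℝ => x ^ (-t))).mul hg_meas
  have hmn : ∀ n : ℕ, Measurable fun x : ℝ => (((n:ℝ)+1)⁻¹ + x) ^ (-t) * g x := fun n =>
    ((by fun_prop : Measurable fun x : ℝ => (((n:ℝ)+1)⁻¹ + x) ^ (-t))).mul hg_meas
  have hintn : ∀ n : ℕ, IntegrableOn (fun x => (((n:ℝ)+1)⁻¹ + x) ^ (-t) * g x) (Ioi 0) := by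
    intro n
    refine (hg_int.norm.const_mul (((n:ℝ)+1) ^ t)).mono' (hmn n).aestronglyMeasurable ?_
    filter_upwards [ae_restrict_mem measurableSet_Ioi] with x hx
    have hx0 := mem_Ioi.mp hx
    have hb0 : (0:ℝ) < ((n:ℝ)+1)⁻¹ + x := by positivity
    rw [norm_mul]
    apply mul_le_mul_of_nonneg_right _ (norm_nonneg _)
    rw [Real.norm_eq_abs, abs_of_pos (Real.rpow_pos_of_pos hb0 _)]
    calc (((n:ℝ)+1)⁻¹ + x) ^ (-t) ≤ (((n:ℝ)+1)⁻¹) ^ (-t) := by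
          apply Real.rpow_le_rpow_of_nonpos (by positivity) (by linarith) (by linarith)
      _ = ((n:ℝ)+1) ^ t := by
          rw [← Real.rpow_neg_one ((n:ℝ)+1), ← Real.rpow_mul (by positivity)]
          norm_num
  set F : ℝ → ℝ≥0∞ := fun x => ENNReal.ofReal (x ^ (-t) * g x) with hF
  have hlim : Filter.Tendsto
      (fun n : ℕ => ∫⁻ x in Ioi (0:ℝ), ENNReal.ofReal ((((n:ℝ)+1)⁻¹ + x) ^ (-t) * g x))
      Filter.atTop (nhds (∫⁻ x in Ioi (0:ℝ), F x)) := by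
    apply lintegral_tendsto_of_tendsto_of_monotone
    · exact fun n => (ENNReal.measurable_ofReal.comp (hmn n)).aemeasurable
    · filter_upwards [ae_restrict_mem measurableSet_Ioi] with x hx
      intro i j hij
      apply ENNReal.ofReal_le_ofReal
      apply mul_le_mul_of_nonneg_right _ (hg_nonneg x (mem_Ioi.mp hx))
      apply Real.rpow_le_rpow_of_nonpos
        (by have hx0 := mem_Ioi.mp hx; positivity) _ (by linarith)
      have : ((j:ℝ)+1)⁻¹ ≤ ((i:ℝ)+1)⁻¹ := by
        apply inv_anti₀ (by positivity)
        exact_mod_cast by omega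
      linarith
    · filter_upwards [ae_restrict_mem measurableSet_Ioi] with x hx
      have hx0 := mem_Ioi.mp hx
      show Filter.Tendsto (fun n : ℕ => ENNReal.ofReal ((((n:ℝ)+1)⁻¹ + x) ^ (-t) * g x))
        Filter.atTop (nhds (ENNReal.ofReal (x ^ (-t) * g x)))
      apply (ENNReal.continuous_ofReal.tendsto _).comp
      apply Filter.Tendsto.mul_const
      have hbase : Filter.Tendsto (fun n : ℕ => ((n:ℝ)+1)⁻¹ + x) Filter.atTop (nhds x) := by
        have h := tendsto_one_div_add_atTop_nhds_zero_nat (𝕜 := ℝ)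
        simp_rw [one_div] at h
        simpa using h.add (tendsto_const_nhds (x := x))
      exact ((Real.continuousAt_rpow_const x (-t) (Or.inl hx0.ne')).tendsto.comp hbase)
  have hle : ∀ n : ℕ, (∫⁻ x in Ioi (0:ℝ), ENNReal.ofReal ((((n:ℝ)+1)⁻¹ + x) ^ (-t) * g x))
      ≤ ENNReal.ofReal K := by
    intro n
    rw [← ofReal_integral_eq_lintegral_ofReal (hintn n) ?_]
    · exact ENNReal.ofReal_le_ofReal (hbound n)
    · filter_upwards [ae_restrict_mem measurableSet_Ioi] with x hx
      have hx0 := mem_Ioi.mp hx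
      exact mul_nonneg (Real.rpow_pos_of_pos (by positivity) _).le (hg_nonneg x hx0)
  have hfin : (∫⁻ x in Ioi (0:ℝ), F x) ≤ ENNReal.ofReal K := le_of_tendsto hlim
    (Filter.Eventually.of_forall hle)
  refine ⟨hm.aestronglyMeasurable, ?_⟩
  rw [hasFiniteIntegral_iff_norm]
  have : (∫⁻ x in Ioi (0:ℝ), ENNReal.ofReal ‖x ^ (-t) * g x‖) = ∫⁻ x in Ioi (0:ℝ), F x := by
    apply lintegral_congr_ae
    filter_upwards [ae_restrict_mem measurableSet_Ioi] with x hx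
    have hx0 := mem_Ioi.mp hx
    rw [Real.norm_eq_abs, abs_of_nonneg
      (mul_nonneg (Real.rpow_pos_of_pos hx0 _).le (hg_nonneg x hx0))]
  rw [this]
  exact lt_of_le_of_lt hfin ENNReal.ofReal_lt_top

lemma invImage9 : (fun y : ℝ => y⁻¹) '' (Ioi 0) = Ioi 0 := by
  ext y
  constructor
  · rintro ⟨x, hx, rfl⟩
    exact inv_pos.mpr (mem_Ioi.mp hx)
  · intro hy
    exact ⟨y⁻¹, inv_pos.mpr (mem_Ioi.mp hy), inv_inv y⟩

lemma invDeriv : ∀ y ∈ Ioi (0:ℝ),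
    HasDerivWithinAt (fun y : ℝ => y⁻¹) (-((y^2)⁻¹)) (Ioi 0) y := fun y hy =>
  (hasDerivAt_inv (mem_Ioi.mp hy).ne').hasDerivWithinAt

lemma invInj : InjOn (fun y : ℝ => y⁻¹) (Ioi 0) := inv_injective.injOn

lemma invConv (k : ℝ → ℝ) :
    ∫ x in Ioi (0:ℝ), k x = ∫ y in Ioi (0:ℝ), |(-((y^2)⁻¹))| • k y⁻¹ := by
  conv_lhs => rw [← invImage9]
  exact integral_image_eq_integral_abs_deriv_smul measurableSet_Ioi invDeriv invInj k

lemma invAlgebra2 (t y C gy : ℝ) (hy : 0 < y) :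
    (y^2)⁻¹ * ((y⁻¹) ^ (t-2) * C * gy) = C * (y ^ (-t) * gy) := by
  have h1 : (y⁻¹) ^ (t-2) = y ^ (2-t) := by
    rw [← Real.rpow_neg_one y, ← Real.rpow_mul hy.le,
      show (-1) * (t-2) = 2 - t from by ring]
  have h2 : (y^2)⁻¹ = y ^ (-2 : ℝ) := by
    rw [show ((y^2)⁻¹ : ℝ) = (y^(2:ℕ))⁻¹ from rfl, ← Real.rpow_natCast y 2,
      ← Real.rpow_neg hy.le]
    norm_num
  have h3 : y ^ (-2:ℝ) * y ^ (2-t) = y ^ (-t) := by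
    rw [← Real.rpow_add hy, show (-2) + (2-t) = -t from by ring]
  calc (y^2)⁻¹ * ((y⁻¹) ^ (t-2) * C * gy)
      = (y ^ (-2:ℝ) * y ^ (2-t)) * C * gy := by rw [h1, h2]; ring
    _ = y ^ (-t) * C * gy := by rw [h3]
    _ = C * (y ^ (-t) * gy) := by ring

lemma invAlgebra (t l y C gy : ℝ) (hl : 0 < l) (hy : 0 < y) :
    (y^2)⁻¹ * ((1 + l * y⁻¹) ^ (-t) * ((y⁻¹) ^ (t-2) * C * gy))
      = C * l ^ (-t) * ((1 + (1/l) * y) ^ (-t) * gy) := by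
  have h5 : (1 + l*y⁻¹) ^ (-t) * y ^ (-t) = (y + l) ^ (-t) := by
    rw [← Real.mul_rpow (by positivity) hy.le]
    congr 1
    field_simp
  have h6 : (y + l) ^ (-t) = l ^ (-t) * (1 + (1/l) * y) ^ (-t) := by
    rw [← Real.mul_rpow hl.le (by positivity)]
    congr 1
    field_simp
    ring
  calc (y^2)⁻¹ * ((1 + l * y⁻¹) ^ (-t) * ((y⁻¹) ^ (t-2) * C * gy))
      = (1 + l * y⁻¹) ^ (-t) * ((y^2)⁻¹ * ((y⁻¹) ^ (t-2) * C * gy)) := by ring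
    _ = (1 + l * y⁻¹) ^ (-t) * (C * (y ^ (-t) * gy)) := by rw [invAlgebra2 t y C gy hy]
    _ = ((1 + l*y⁻¹) ^ (-t) * y ^ (-t)) * C * gy := by ring
    _ = (y + l) ^ (-t) * C * gy := by rw [h5]
    _ = (l ^ (-t) * (1 + (1/l) * y) ^ (-t)) * C * gy := by rw [h6]
    _ = C * l ^ (-t) * ((1 + (1/l) * y) ^ (-t) * gy) := by ring

theorem dirichlet_mean_density_duality {Ω : Type*} [MeasurableSpace Ω]
    (μ : Measure Ω) [IsProbabilityMeasure μ] (t : ℝ) (ht : 0 < t)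
    (G : Ω → ℝ) (hG_meas : Measurable G) (hG_pos : ∀ ω, 0 < G ω)
    (hG_int : Integrable (fun ω => Real.log (G ω)) μ)
    (g h : ℝ → ℝ) (hg_meas : Measurable g) (hh_meas : Measurable h)
    (hg_nonneg : ∀ x, 0 < x → 0 ≤ g x) (hh_nonneg : ∀ x, 0 < x → 0 ≤ h x)
    (hg_density : ∫ x in Ioi (0:ℝ), g x = 1)
    (hh_density : ∫ x in Ioi (0:ℝ), h x = 1)
    (hg_int : IntegrableOn g (Ioi 0)) (hh_int : IntegrableOn h (Ioi 0))
    (hg_char : ∀ l : ℝ, 0 < l →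
      (∫ x in Ioi (0:ℝ), (1 + l * x) ^ (-t) * g x)
        = Real.exp (-(t * ∫ ω, Real.log (1 + l / G ω) ∂μ)))
    (hh_char : ∀ l : ℝ, 0 < l →
      (∫ x in Ioi (0:ℝ), (1 + l * x) ^ (-t) * h x)
        = Real.exp (-(t * ∫ ω, Real.log (1 + l * G ω) ∂μ))) :
    ∀ᵐ x ∂(volume.restrict (Ioi (0:ℝ))),
      h x = x ^ (t - 2) * Real.exp (-(t * ∫ ω, Real.log (G ω) ∂μ)) * g (1 / x) := by
  set L : ℝ := ∫ ω, Real.log (G ω) ∂μ with hL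
  set C : ℝ := Real.exp (-(t * L)) with hC
  set H : ℝ → ℝ := fun x => x ^ (t - 2) * C * g (1/x) with hH
  have hHm : Measurable H := by
    rw [hH]; fun_prop
  -- integrability on the Ω side
  have hGinv_pos : ∀ ω, 0 < (G ω)⁻¹ := fun ω => inv_pos.mpr (hG_pos ω)
  have hGinv_int : Integrable (fun ω => Real.log ((G ω)⁻¹)) μ := by
    simp_rw [Real.log_inv]; exact hG_int.neg
  have hIntDiv : ∀ l : ℝ, 0 < l → Integrable (fun ω => Real.log (1 + l / G ω)) μ := by
    intro l hl
    have := logOnePlusIntegrable μ (fun ω => (G ω)⁻¹) hG_meas.inv hGinv_pos hGinv_int l hl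
    simpa [div_eq_mul_inv] using this
  -- duality identity
  have hdual : ∀ l : ℝ, 0 < l → (∫ ω, Real.log (1 + l * G ω) ∂μ)
      = Real.log l + L + ∫ ω, Real.log (1 + (1/l) / G ω) ∂μ := by
    intro l hl
    have hpt : ∀ ω, Real.log (1 + l * G ω)
        = (Real.log l + Real.log (G ω)) + Real.log (1 + (1/l) / G ω) := by
      intro ω
      have hG := hG_pos ω
      have h1 : (0:ℝ) < 1 + (1/l)/G ω := by positivity
      rw [← Real.log_mul hl.ne' hG.ne', ← Real.log_mul (by positivity) h1.ne']
      congr 1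
      field_simp
      ring
    simp_rw [hpt]
    have hi1 : Integrable (fun ω => Real.log l + Real.log (G ω)) μ :=
      (integrable_const _).add hG_int
    rw [integral_add hi1 (hIntDiv (1/l) (by positivity)),
      integral_add (integrable_const (Real.log l)) hG_int, integral_const]
    simp [hL]
  -- the transform of H
  have hHtrans : ∀ l : ℝ, 0 < l → ∫ x in Ioi (0:ℝ), (1 + l * x) ^ (-t) * H x
      = Real.exp (-(t * ∫ ω, Real.log (1 + l * G ω) ∂μ)) := by
    intro l hl
    rw [invConv (fun x => (1 + l * x) ^ (-t) * H x)]
    have hcongr : ∀ᵐ y ∂(volume.restrict (Ioi (0:ℝ))),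
        |(-((y^2)⁻¹))| • ((1 + l * y⁻¹) ^ (-t) * H y⁻¹)
          = C * l ^ (-t) * ((1 + (1/l) * y) ^ (-t) * g y) := by
      filter_upwards [ae_restrict_mem measurableSet_Ioi] with y hy
      have hy0 := mem_Ioi.mp hy
      rw [smul_eq_mul, abs_neg, abs_of_pos (by positivity), hH]
      simp only
      rw [show (1:ℝ)/y⁻¹ = y from by field_simp]
      exact invAlgebra t l y C (g y) hl hy0
    rw [integral_congr_ae hcongr, integral_const_mul, hg_char (1/l) (by positivity),
      hdual l hl, hC, Real.rpow_def_of_pos hl, ← Real.exp_add, ← Real.exp_add]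
    congr 1
    ring
  -- integrability of H
  have hWb : ∀ n : ℕ, ∫ x in Ioi (0:ℝ), (((n:ℝ)+1)⁻¹ + x) ^ (-t) * g x
      ≤ Real.exp (t * L) := by
    intro n
    have hn : (0:ℝ) < (n:ℝ)+1 := by positivity
    have hcongr : ∀ᵐ x ∂(volume.restrict (Ioi (0:ℝ))),
        (((n:ℝ)+1)⁻¹ + x) ^ (-t) * g x
          = ((n:ℝ)+1) ^ t * ((1 + ((n:ℝ)+1) * x) ^ (-t) * g x) := by
      filter_upwards [ae_restrict_mem measurableSet_Ioi] with x hx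
      have hx0 := mem_Ioi.mp hx
      have e1 : ((n:ℝ)+1)⁻¹ + x = ((n:ℝ)+1)⁻¹ * (1 + ((n:ℝ)+1) * x) := by
        field_simp
      have e2 : (((n:ℝ)+1)⁻¹ * (1 + ((n:ℝ)+1) * x)) ^ (-t)
          = ((n:ℝ)+1) ^ t * (1 + ((n:ℝ)+1) * x) ^ (-t) := by
        rw [Real.mul_rpow (by positivity) (by positivity)]
        congr 1
        rw [← Real.rpow_neg_one ((n:ℝ)+1), ← Real.rpow_mul hn.le,
          show (-1) * (-t) = t from by ring]
      rw [e1, e2, mul_assoc]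
    rw [integral_congr_ae hcongr, integral_const_mul, hg_char ((n:ℝ)+1) hn]
    have hmono : Real.log ((n:ℝ)+1) - L ≤ ∫ ω, Real.log (1 + ((n:ℝ)+1) / G ω) ∂μ := by
      have hle : ∀ ω, Real.log ((n:ℝ)+1) - Real.log (G ω)
          ≤ Real.log (1 + ((n:ℝ)+1) / G ω) := by
        intro ω
        have hG := hG_pos ω
        rw [← Real.log_div hn.ne' hG.ne']
        apply Real.log_le_log (by positivity)
        have : (0:ℝ) < ((n:ℝ)+1) / G ω := by positivity
        linarith
      have hi : Integrable (fun ω => Real.log ((n:ℝ)+1) - Real.log (G ω)) μ :=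
        (integrable_const _).sub hG_int
      have hmm := integral_mono hi (hIntDiv ((n:ℝ)+1) hn) hle
      rwa [integral_sub (integrable_const (Real.log ((n:ℝ)+1))) hG_int, integral_const,
        probReal_univ, smul_eq_mul, one_mul, ← hL] at hmm
    calc ((n:ℝ)+1) ^ t * Real.exp (-(t * ∫ ω, Real.log (1 + ((n:ℝ)+1) / G ω) ∂μ))
        = Real.exp (t * Real.log ((n:ℝ)+1)
            - t * ∫ ω, Real.log (1 + ((n:ℝ)+1) / G ω) ∂μ) := by
          rw [Real.rpow_def_of_pos hn, ← Real.exp_add]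
          congr 1
          ring
      _ ≤ Real.exp (t * L) := by
          apply Real.exp_le_exp.mpr
          nlinarith [hmono, ht.le]
  have hWt : IntegrableOn (fun x => x ^ (-t) * g x) (Ioi 0) :=
    rpowWeightIntegrable g hg_meas hg_nonneg hg_int t ht (Real.exp (t * L))
      (Real.exp_pos _).le hWb
  have hHint : IntegrableOn H (Ioi 0) := by
    have himg : IntegrableOn H ((fun y : ℝ => y⁻¹) '' (Ioi 0)) ↔
        IntegrableOn (fun y => |(-((y^2)⁻¹))| • H y⁻¹) (Ioi 0) :=
      integrableOn_image_iff_integrableOn_abs_deriv_smul measurableSet_Ioi invDeriv invInj H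
    rw [invImage9] at himg
    rw [himg]
    apply (hWt.const_mul C).congr
    filter_upwards [ae_restrict_mem measurableSet_Ioi] with y hy
    have hy0 := mem_Ioi.mp hy
    rw [smul_eq_mul, abs_neg, abs_of_pos (by positivity), hH]
    simp only
    rw [show (1:ℝ)/y⁻¹ = y from by field_simp]
    exact (invAlgebra2 t y C (g y) hy0).symm
  -- the difference has vanishing transform
  have hfS : ∀ l : ℝ, 0 < l →
      ∫ x in Ioi (0:ℝ), (1 + l * x) ^ (-t) * (h x - H x) = 0 := by
    intro l hl
    have hsub : (fun x => (1 + l * x) ^ (-t) * (h x - H x))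
        = fun x => (1 + l * x) ^ (-t) * h x - (1 + l * x) ^ (-t) * H x := by
      funext x; ring
    rw [hsub, integral_sub (stieltjesIntegrable h hh_meas hh_int t l ht hl)
      (stieltjesIntegrable H hHm hHint t l ht hl), hh_char l hl, hHtrans l hl, sub_self]
  have hfz := stieltjesZero (fun x => h x - H x) t ht (hh_meas.sub hHm)
    (hh_int.sub hHint) hfS
  filter_upwards [hfz] with x hx
  have h2 : h x = H x := by linarith [hx]
  rw [h2, hH]
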